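/- Let A be an m×n matrix with entries in [0,1] and x ∈ ℝ_{≥0}^n, let α ≥ 2, and let z be the randomized rounding of x at scale α. Fix i ∈ [m] and let θ ∈ (0,1] satisfy ∑_{j : A_{i,j} ≤ θ} A_{i,j} x_j ≥ 1/2. Then P[(Az)_i < 1] ≤ exp((1 + ln(α/2) − α/2)/θ). -/

import Mathlib

open MeasureTheory ProbabilityTheory

/-- Expectation of a function of a {0,1}-valued random variable. -/
lemma twoPoint {Ω : Type*} [MeasurableSpace Ω] (P : Measure Ω) [IsProbabilityMeasure P]
    (Y : Ω → ℕ) (hm : Measurable Y) (h1 : ∀ ω, Y ω ≤ 1) (g : ℕ → ℝ) :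
    Integrable (fun ω => g (Y ω)) P ∧
      ∫ ω, g (Y ω) ∂P =
        g 0 * (1 - (P {ω | Y ω = 1}).toReal) + g 1 * (P {ω | Y ω = 1}).toReal := by
  have hSm : MeasurableSet {ω | Y ω = 1} := hm (measurableSet_singleton 1)
  have hfun : (fun ω => g (Y ω)) =
      fun ω => g 0 + Set.indicator {ω | Y ω = 1} (fun _ => g 1 - g 0) ω := by
    funext ω
    rcases Nat.le_one_iff_eq_zero_or_eq_one.mp (h1 ω) with h | h
    · have hω : ω ∉ {ω | Y ω = 1} := by simp [Set.mem_setOf_eq, h]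
      simp [h, Set.indicator_of_notMem hω]
    · have hω : ω ∈ {ω | Y ω = 1} := h
      simp [h, Set.indicator_of_mem hω]
  constructor
  · rw [hfun]
    exact (integrable_const _).add ((integrable_const _).indicator hSm)
  · rw [hfun, integral_add (integrable_const _) ((integrable_const _).indicator hSm),
      integral_const, integral_indicator_const _ hSm]
    simp only [Measure.real, measure_univ, ENNReal.toReal_one, one_smul, smul_eq_mul]
    ring

/-- Convexity bound: `exp (t*b) - 1 ≤ b * (exp t - 1)` for `b ∈ [0,1]`. -/
lemma exp_mul_sub_one_le (b t : ℝ) (hb0 : 0 ≤ b) (hb1 : b ≤ 1) :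
    Real.exp (t * b) - 1 ≤ b * (Real.exp t - 1) := by
  have hcx := convexOn_exp.2 (Set.mem_univ (0:ℝ)) (Set.mem_univ t)
    (by linarith : (0:ℝ) ≤ 1 - b) hb0 (by ring)
  simp only [smul_eq_mul, mul_zero, zero_add, Real.exp_zero, mul_one] at hcx
  rw [mul_comm t b]
  nlinarith [hcx]

/-- Chernoff-based concentration for the randomized rounding step
restricted to θ-small coefficients (Lemma `median-concentration`). -/
theorem stmt_13 (m n : ℕ) (A : Fin m → Fin n → ℝ) (x : Fin n → ℝ) (α : ℝ)
    (Ω : Type*) [MeasurableSpace Ω] (P : Measure Ω) [IsProbabilityMeasure P]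
    (Y : Fin n → Ω → ℕ) (z : Ω → Fin n → ℕ)
    (hA : ∀ i j, A i j ∈ Set.Icc (0 : ℝ) 1)
    (hx : ∀ j, 0 ≤ x j)
    (hα : 2 ≤ α)
    (hYmeas : ∀ j, Measurable (Y j))
    (hY01 : ∀ j ω, Y j ω ≤ 1)
    (hYind : iIndepFun Y P)
    (hYber : ∀ j, P {ω | Y j ω = 1} = ENNReal.ofReal (α * x j - (⌊α * x j⌋₊ : ℝ)))
    (hz : ∀ ω j, z ω j = ⌊α * x j⌋₊ + Y j ω)
    (i : Fin m) (θ : ℝ) (hθ : θ ∈ Set.Ioc (0 : ℝ) 1)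
    (hsmall : 1 / 2 ≤ ∑ j ∈ Finset.univ.filter (fun j => A i j ≤ θ), A i j * x j) :
    P {ω | ∑ j, A i j * (z ω j : ℝ) < 1} ≤
      ENNReal.ofReal (Real.exp ((1 + Real.log (α / 2) - α / 2) / θ)) := by
  obtain ⟨hθ0, hθ1⟩ := hθ
  have hα0 : (0:ℝ) < α := lt_of_lt_of_le (by norm_num) hα
  have hc1 : 1 ≤ α / 2 := by linarith
  have hc0 : (0:ℝ) < α / 2 := by linarith
  set t : ℝ := -Real.log (α / 2) with ht_def
  have ht : t ≤ 0 := by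
    have := Real.log_nonneg hc1
    simp only [ht_def]; linarith
  set F : Finset (Fin n) := Finset.univ.filter (fun j => A i j ≤ θ) with hF
  set X : Fin n → Ω → ℝ :=
    fun j ω => (A i j / θ) * ((⌊α * x j⌋₊ : ℝ) + (Y j ω : ℝ)) with hX
  have hbnn : ∀ j, 0 ≤ A i j / θ := fun j => div_nonneg (hA i j).1 hθ0.le
  have hb1 : ∀ j ∈ F, A i j / θ ≤ 1 := by
    intro j hj
    rw [hF, Finset.mem_filter] at hj
    exact div_le_one_of_le₀ hj.2 hθ0.le
  have hXmeas : ∀ j, Measurable (X j) := by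
    intro j
    exact (measurable_const.add (measurable_from_top.comp (hYmeas j))).const_mul _
  have hXind : iIndepFun X P := by
    exact hYind.comp (fun j (y : ℕ) => (A i j / θ) * ((⌊α * x j⌋₊ : ℝ) + (y : ℝ)))
      (fun j => measurable_from_top)
  -- the Bernoulli parameter
  have hfrac : ∀ j : Fin n, (P {ω | Y j ω = 1}).toReal = α * x j - (⌊α * x j⌋₊ : ℝ) ∧
      0 ≤ α * x j - (⌊α * x j⌋₊ : ℝ) ∧ α * x j - (⌊α * x j⌋₊ : ℝ) < 1 := by
    intro j
    have hnn : 0 ≤ α * x j := mul_nonneg hα0.le (hx j)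
    have h0 : (⌊α * x j⌋₊ : ℝ) ≤ α * x j := Nat.floor_le hnn
    have h1 : α * x j < ⌊α * x j⌋₊ + 1 := Nat.lt_floor_add_one _
    exact ⟨by rw [hYber j, ENNReal.toReal_ofReal (by linarith)], by linarith, by linarith⟩
  -- integrability of exp(t * X j)
  have hint : ∀ j : Fin n, Integrable (fun ω => Real.exp (t * X j ω)) P := fun j =>
    (twoPoint P (Y j) (hYmeas j) (hY01 j)
      (fun y => Real.exp (t * ((A i j / θ) * ((⌊α * x j⌋₊ : ℝ) + (y : ℝ)))))).1
  -- mgf bound for each coordinate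
  have hmgf : ∀ j ∈ F, mgf (X j) P t ≤
      Real.exp (α * x j * ((A i j / θ) * (Real.exp t - 1))) := by
    intro j hj
    obtain ⟨hp_eq, hp0, hp1⟩ := hfrac j
    set p : ℝ := α * x j - (⌊α * x j⌋₊ : ℝ) with hp
    set k : ℝ := (⌊α * x j⌋₊ : ℝ) with hk
    set b : ℝ := A i j / θ with hbdef
    have hk0 : 0 ≤ k := Nat.cast_nonneg _
    have hval : mgf (X j) P t
        = Real.exp (t * (b * (k + 0))) * (1 - p) + Real.exp (t * (b * (k + 1))) * p := by
      have h2 := (twoPoint P (Y j) (hYmeas j) (hY01 j)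
          (fun y => Real.exp (t * (b * (k + (y : ℝ)))))).2
      rw [hp_eq] at h2
      simpa [mgf] using h2
    have hbtb : t * b ≤ Real.exp (t * b) - 1 := by
      have := Real.add_one_le_exp (t * b)
      linarith
    have hub : Real.exp (t * b) - 1 ≤ b * (Real.exp t - 1) :=
      exp_mul_sub_one_le b t (hbnn j) (hb1 j hj)
    have h1 : Real.exp (t * (b * (k + 0))) ≤ Real.exp (k * (Real.exp (t * b) - 1)) := by
      apply Real.exp_le_exp.mpr
      have he : t * (b * (k + 0)) = k * (t * b) := by ring
      rw [he]
      exact mul_le_mul_of_nonneg_left hbtb hk0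
    have h2 : 1 - p + Real.exp (t * b) * p ≤ Real.exp (p * (Real.exp (t * b) - 1)) := by
      have hle := Real.add_one_le_exp (p * (Real.exp (t * b) - 1))
      nlinarith
    have hpos2 : 0 ≤ 1 - p + Real.exp (t * b) * p := by
      nlinarith [Real.exp_nonneg (t * b)]
    have hsplit : Real.exp (t * (b * (k + 1)))
        = Real.exp (t * (b * (k + 0))) * Real.exp (t * b) := by
      rw [← Real.exp_add]; ring_nf
    calc mgf (X j) P t
        = Real.exp (t * (b * (k + 0))) * (1 - p + Real.exp (t * b) * p) := by
          rw [hval, hsplit]; ring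
      _ ≤ Real.exp (k * (Real.exp (t * b) - 1)) * Real.exp (p * (Real.exp (t * b) - 1)) :=
          mul_le_mul h1 h2 hpos2 (Real.exp_nonneg _)
      _ = Real.exp ((k + p) * (Real.exp (t * b) - 1)) := by rw [← Real.exp_add]; ring_nf
      _ = Real.exp (α * x j * (Real.exp (t * b) - 1)) := by
          have : k + p = α * x j := by rw [hp, hk]; ring
          rw [this]
      _ ≤ Real.exp (α * x j * (b * (Real.exp t - 1))) := by
          apply Real.exp_le_exp.mpr
          exact mul_le_mul_of_nonneg_left hub (mul_nonneg hα0.le (hx j))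
  -- event inclusion
  have hW_le : P {ω | ∑ j, A i j * (z ω j : ℝ) < 1}
      ≤ P {ω | (∑ j ∈ F, X j) ω ≤ 1/θ} := by
    apply measure_mono
    intro ω hω
    simp only [Set.mem_setOf_eq] at hω ⊢
    have hsum : (∑ j ∈ F, X j) ω = (1/θ) * ∑ j ∈ F, A i j * (z ω j : ℝ) := by
      rw [Finset.sum_apply, Finset.mul_sum]
      apply Finset.sum_congr rfl
      intro j _
      simp only [hX]
      rw [hz ω j]
      push_cast
      field_simp
    have hsub : ∑ j ∈ F, A i j * (z ω j : ℝ) ≤ ∑ j, A i j * (z ω j : ℝ) := by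
      apply Finset.sum_le_sum_of_subset_of_nonneg (Finset.subset_univ F)
      intro j _ _
      exact mul_nonneg (hA i j).1 (Nat.cast_nonneg _)
    rw [hsum]
    have h1θ : 0 < 1/θ := by positivity
    calc (1/θ) * ∑ j ∈ F, A i j * (z ω j : ℝ)
        ≤ (1/θ) * 1 := mul_le_mul_of_nonneg_left (le_of_lt (lt_of_le_of_lt hsub hω)) h1θ.le
      _ = 1/θ := mul_one _
  -- Chernoff
  have hIntSum : Integrable (fun ω => Real.exp (t * (∑ j ∈ F, X j) ω)) P :=
    hXind.integrable_exp_mul_sum hXmeas (fun j _ => hint j)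
  have hchern := measure_le_le_exp_mul_mgf (μ := P) (X := ∑ j ∈ F, X j) (1/θ) ht hIntSum
  have hmgfsum := hXind.mgf_sum hXmeas F (t := t)
  -- bound the product of mgfs
  have het : Real.exp t - 1 ≤ 0 := by
    have : Real.exp t ≤ 1 := Real.exp_le_one_iff.mpr ht
    linarith
  have hprod : ∏ j ∈ F, mgf (X j) P t
      ≤ Real.exp ((Real.exp t - 1) * (α / (2 * θ))) := by
    calc ∏ j ∈ F, mgf (X j) P t
        ≤ ∏ j ∈ F, Real.exp (α * x j * ((A i j / θ) * (Real.exp t - 1))) :=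
          Finset.prod_le_prod (fun j _ => mgf_nonneg) hmgf
      _ = Real.exp (∑ j ∈ F, α * x j * ((A i j / θ) * (Real.exp t - 1))) :=
          (Real.exp_sum F _).symm
      _ ≤ Real.exp ((Real.exp t - 1) * (α / (2 * θ))) := by
          apply Real.exp_le_exp.mpr
          have heq : ∑ j ∈ F, α * x j * ((A i j / θ) * (Real.exp t - 1))
              = (Real.exp t - 1) * ((α / θ) * ∑ j ∈ F, A i j * x j) := by
            rw [Finset.mul_sum, Finset.mul_sum]
            apply Finset.sum_congr rfl
            intro j _
            ring
          rw [heq]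
          have hge : α / (2 * θ) ≤ (α / θ) * ∑ j ∈ F, A i j * x j := by
            have h1 : (α / θ) * (1/2) ≤ (α / θ) * ∑ j ∈ F, A i j * x j := by
              apply mul_le_mul_of_nonneg_left hsmall
              positivity
            calc α / (2 * θ) = (α / θ) * (1/2) := by
                  rw [div_mul_div_comm, mul_one, mul_comm θ 2]
              _ ≤ _ := h1
          exact mul_le_mul_of_nonpos_left hge het
  -- final numeric computation
  have hfinal : Real.exp (-t * (1/θ)) * Real.exp ((Real.exp t - 1) * (α / (2 * θ)))
      = Real.exp ((1 + Real.log (α / 2) - α / 2) / θ) := by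
    rw [← Real.exp_add]
    congr 1
    have hexp_t : Real.exp t = (α/2)⁻¹ := by
      rw [ht_def, Real.exp_neg, Real.exp_log hc0]
    rw [hexp_t, ht_def]
    have hα2 : α / 2 ≠ 0 := ne_of_gt hc0
    field_simp
    ring
  -- put everything together
  have hreal : (P {ω | (∑ j ∈ F, X j) ω ≤ 1/θ}).toReal
      ≤ Real.exp ((1 + Real.log (α / 2) - α / 2) / θ) := by
    calc (P {ω | (∑ j ∈ F, X j) ω ≤ 1/θ}).toReal
        ≤ Real.exp (-t * (1/θ)) * mgf (∑ j ∈ F, X j) P t := hchern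
      _ = Real.exp (-t * (1/θ)) * ∏ j ∈ F, mgf (X j) P t := by rw [hmgfsum]
      _ ≤ Real.exp (-t * (1/θ)) * Real.exp ((Real.exp t - 1) * (α / (2 * θ))) :=
          mul_le_mul_of_nonneg_left hprod (Real.exp_nonneg _)
      _ = Real.exp ((1 + Real.log (α / 2) - α / 2) / θ) := hfinal
  calc P {ω | ∑ j, A i j * (z ω j : ℝ) < 1}
      ≤ P {ω | (∑ j ∈ F, X j) ω ≤ 1/θ} := hW_le
    _ = ENNReal.ofReal (P {ω | (∑ j ∈ F, X j) ω ≤ 1/θ}).toReal :=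
        (ENNReal.ofReal_toReal (measure_ne_top _ _)).symm
    _ ≤ ENNReal.ofReal (Real.exp ((1 + Real.log (α / 2) - α / 2) / θ)) :=
        ENNReal.ofReal_le_ofReal hreal
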